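/- Let {x_t}_{t=1}^T be a sequence of vectors in ℝ^d with ‖x_t‖ ≤ L for all t, let λ > 0, and define V_t = λI_d + Σ_{s=1}^t x_s x_sᵀ for t = 0, 1, …, T (so V_0 = λI_d). Then Σ_{t=1}^T min{1, x_tᵀ V_{t−1}⁻¹ x_t} ≤ 2d·log(1 + L²T/(dλ)), where log denotes the natural logarithm. -/

import Mathlib

open Matrix

/-- Euclidean norm of a vector in `ℝ^m`. -/
noncomputable def l2norm {m : ℕ} (v : Fin m → ℝ) : ℝ := Real.sqrt (∑ i, v i ^ 2)

lemma epl_vmv_mulVec {d : ℕ} (v y : Fin d → ℝ) : vecMulVec v v *ᵥ y = (v ⬝ᵥ y) • v := by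
  ext i
  simp only [vecMulVec, mulVec, dotProduct, Pi.smul_apply, smul_eq_mul, Finset.sum_mul,
    Matrix.of_apply]
  exact Finset.sum_congr rfl fun j _ => by ring

lemma epl_psd_vecMulVec {d : ℕ} (v : Fin d → ℝ) : (vecMulVec v v).PosSemidef := by
  refine Matrix.PosSemidef.of_dotProduct_mulVec_nonneg ?_ ?_
  · ext i j; simp [vecMulVec, mul_comm]
  · intro y
    rw [epl_vmv_mulVec]
    simp only [dotProduct_smul, smul_eq_mul, star_trivial]
    rw [show (y ⬝ᵥ v) = v ⬝ᵥ y from dotProduct_comm _ _]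
    exact mul_self_nonneg _

lemma epl_pd_smul_one {d : ℕ} {lam : ℝ} (hlam : 0 < lam) :
    (lam • (1 : Matrix (Fin d) (Fin d) ℝ)).PosDef := by
  refine Matrix.PosDef.of_dotProduct_mulVec_pos ?_ ?_
  · ext i j
    simp [Matrix.one_apply, eq_comm]
  · intro y hy
    have h : (lam • (1 : Matrix (Fin d) (Fin d) ℝ)) *ᵥ y = lam • y := by
      ext i; simp [mulVec, dotProduct, Matrix.one_apply]
    rw [h]
    simp only [dotProduct_smul, smul_eq_mul, star_trivial]
    refine mul_pos hlam (lt_of_le_of_ne (Finset.sum_nonneg fun i _ => mul_self_nonneg _) ?_)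
    exact fun h => hy (dotProduct_self_eq_zero.mp h.symm)

lemma epl_psd_sum {d : ℕ} {ι : Type*} (S : Finset ι) (f : ι → Fin d → ℝ) :
    (∑ s ∈ S, vecMulVec (f s) (f s)).PosSemidef := by
  classical
  induction S using Finset.induction with
  | empty => simpa using Matrix.PosSemidef.zero
  | insert _ _ h ih => rw [Finset.sum_insert h]; exact (epl_psd_vecMulVec _).add ih

lemma epl_det_step {d : ℕ} {A : Matrix (Fin d) (Fin d) ℝ} (hA : A.PosDef) (v : Fin d → ℝ) :
    (A + vecMulVec v v).det = A.det * (1 + v ⬝ᵥ A⁻¹ *ᵥ v) := by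
  rw [vecMulVec_eq Unit, Matrix.det_add_replicateCol_mul_replicateRow hA.det_pos.ne'.isUnit]
  congr 1
  simp [Matrix.det_unique, Matrix.mul_apply, mulVec, dotProduct, Finset.mul_sum,
    Matrix.one_apply, Finset.sum_mul]
  rw [Finset.sum_comm]
  exact Finset.sum_congr rfl fun i _ => Finset.sum_congr rfl fun j _ => by ring

lemma epl_div_le_log {w : ℝ} (hw : 0 ≤ w) : w / (1 + w) ≤ Real.log (1 + w) := by
  have h1 : (0:ℝ) < 1 + w := by linarith
  have h2 := Real.log_le_sub_one_of_pos (inv_pos.mpr h1)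
  rw [Real.log_inv] at h2
  have h3 : 1 - (1 + w)⁻¹ = w / (1 + w) := by field_simp; ring
  linarith

lemma epl_min_le {u : ℝ} (hu : 0 ≤ u) : min 1 u ≤ 2 * Real.log (1 + u) := by
  rcases le_total u 1 with h | h
  · rw [min_eq_right h]
    have h1 : (0:ℝ) < 1 + u := by linarith
    have h4 : u ≤ 2 * (u / (1 + u)) := by
      rw [mul_div_assoc', le_div_iff₀ h1]; nlinarith
    nlinarith [epl_div_le_log hu]
  · rw [min_eq_left h]
    have h2 : Real.log 2 ≤ Real.log (1 + u) := Real.log_le_log (by norm_num) (by linarith)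
    have h3 : (1:ℝ)/2 ≤ Real.log 2 := by
      have := epl_div_le_log (zero_le_one (α := ℝ))
      norm_num at this
      linarith
    linarith

lemma epl_trace_eq_sum {d : ℕ} {A : Matrix (Fin d) (Fin d) ℝ} (hA : A.IsHermitian) :
    A.trace = ∑ i, hA.eigenvalues i := by
  simpa using hA.trace_eq_sum_eigenvalues

lemma epl_log_det_le {d : ℕ} (hd : 0 < d) {A : Matrix (Fin d) (Fin d) ℝ} (hA : A.PosDef) :
    Real.log A.det ≤ d * Real.log (A.trace / d) := by
  have hμ : ∀ i, 0 < hA.isHermitian.eigenvalues i := hA.eigenvalues_pos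
  have hdet : A.det = ∏ i, hA.isHermitian.eigenvalues i := by
    simpa using hA.isHermitian.det_eq_prod_eigenvalues
  have htr : A.trace = ∑ i, hA.isHermitian.eigenvalues i := epl_trace_eq_sum _
  set m := A.trace / d with hm
  have htr_pos : 0 < A.trace := by
    rw [htr]
    exact Finset.sum_pos (fun i _ => hμ i)
      (by simp [Finset.univ_nonempty_iff, Fin.pos_iff_nonempty.mp hd])
  have hmpos : 0 < m := div_pos htr_pos (by exact_mod_cast hd)
  have key : ∀ i, Real.log (hA.isHermitian.eigenvalues i) ≤
      Real.log m + (hA.isHermitian.eigenvalues i / m - 1) := by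
    intro i
    have := Real.log_le_sub_one_of_pos (div_pos (hμ i) hmpos)
    rw [Real.log_div (hμ i).ne' hmpos.ne'] at this
    linarith
  rw [hdet, Real.log_prod (fun i _ => (hμ i).ne')]
  calc ∑ i, Real.log (hA.isHermitian.eigenvalues i)
      ≤ ∑ i : Fin d, (Real.log m + (hA.isHermitian.eigenvalues i / m - 1)) :=
        Finset.sum_le_sum fun i _ => key i
    _ = d * Real.log m + ((∑ i, hA.isHermitian.eigenvalues i) / m - d) := by
        rw [Finset.sum_add_distrib]
        simp [Finset.sum_div, Finset.sum_sub_distrib, mul_comm]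
    _ = d * Real.log m := by
        rw [← htr, hm]
        field_simp
        ring

/-- Elliptical potential lemma: if `‖x_t‖ ≤ L` for all `t`, `λ > 0`, and
`V_t = λ I_d + ∑_{s ≤ t} x_s x_sᵀ`, then
`∑_{t=1}^T min{1, x_tᵀ V_{t-1}⁻¹ x_t} ≤ 2 d log(1 + L²T/(dλ))`. -/
theorem elliptical_potential (d T : ℕ) (L lam : ℝ) (hlam : 0 < lam)
    (x : Fin T → Fin d → ℝ) (hx : ∀ t, l2norm (x t) ≤ L) :
    ∑ t : Fin T,
        min 1
          (x t ⬝ᵥ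
            ((lam • (1 : Matrix (Fin d) (Fin d) ℝ) +
                ∑ s ∈ Finset.univ.filter (fun s : Fin T => s < t),
                  vecMulVec (x s) (x s))⁻¹ *ᵥ x t))
      ≤ 2 * d * Real.log (1 + L ^ 2 * T / (d * lam)) := by
  classical
  rcases Nat.eq_zero_or_pos d with hd | hd
  · subst hd
    simp [dotProduct]
  rcases Nat.eq_zero_or_pos T with hT | hT
  · subst hT
    simp
  have hL : 0 ≤ L := le_trans (Real.sqrt_nonneg _) (hx ⟨0, hT⟩)
  set V : ℕ → Matrix (Fin d) (Fin d) ℝ := fun n =>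
    lam • (1 : Matrix (Fin d) (Fin d) ℝ) +
      ∑ s ∈ Finset.univ.filter (fun s : Fin T => (s : ℕ) < n), vecMulVec (x s) (x s) with hV
  have hVpd : ∀ n, (V n).PosDef := fun n =>
    (epl_pd_smul_one hlam).add_posSemidef (epl_psd_sum _ _)
  have hVt : ∀ t : Fin T,
      (lam • (1 : Matrix (Fin d) (Fin d) ℝ) +
        ∑ s ∈ Finset.univ.filter (fun s : Fin T => s < t), vecMulVec (x s) (x s))
        = V (t : ℕ) := by
    intro t
    rfl
  have hVrec : ∀ t : Fin T, V ((t : ℕ) + 1) = V (t : ℕ) + vecMulVec (x t) (x t) := by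
    intro t
    rw [hV]
    simp only
    have hins : Finset.univ.filter (fun s : Fin T => (s : ℕ) < (t : ℕ) + 1)
        = insert t (Finset.univ.filter (fun s : Fin T => (s : ℕ) < (t : ℕ))) := by
      ext s
      simp only [Finset.mem_filter, Finset.mem_univ, true_and, Finset.mem_insert, Fin.ext_iff]
      omega
    rw [hins, Finset.sum_insert (by simp), add_assoc, add_comm (vecMulVec (x t) (x t)) _,
      ← add_assoc]
  set q : Fin T → ℝ := fun t => x t ⬝ᵥ (V (t : ℕ))⁻¹ *ᵥ x t with hqdef
  have hq0 : ∀ t, 0 ≤ q t := by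
    intro t
    have := ((hVpd (t : ℕ)).inv.posSemidef).dotProduct_mulVec_nonneg (x t)
    simpa using this
  have hdetpos : ∀ n, 0 < (V n).det := fun n => (hVpd n).det_pos
  have hlog : ∀ t : Fin T, Real.log (1 + q t)
      = Real.log ((V ((t : ℕ) + 1)).det) - Real.log ((V (t : ℕ)).det) := by
    intro t
    rw [hVrec t, epl_det_step (hVpd (t : ℕ)) (x t),
      Real.log_mul (hdetpos (t : ℕ)).ne' (by have := hq0 t; positivity)]
    ring
  have hsum1 : ∑ t : Fin T,
      min 1 (x t ⬝ᵥ
        ((lam • (1 : Matrix (Fin d) (Fin d) ℝ) +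
            ∑ s ∈ Finset.univ.filter (fun s : Fin T => s < t),
              vecMulVec (x s) (x s))⁻¹ *ᵥ x t))
      = ∑ t : Fin T, min 1 (q t) := by
    refine Finset.sum_congr rfl fun t _ => ?_
    rw [hVt t]
  have hsum2 : ∑ t : Fin T, min 1 (q t) ≤ 2 * ∑ t : Fin T, Real.log (1 + q t) := by
    rw [Finset.mul_sum]
    exact Finset.sum_le_sum fun t _ => epl_min_le (hq0 t)
  have htel : ∑ t : Fin T, Real.log (1 + q t)
      = Real.log ((V T).det) - Real.log ((V 0).det) := by
    have h1 : ∑ t : Fin T, Real.log (1 + q t)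
        = ∑ t : Fin T, (Real.log ((V ((t : ℕ) + 1)).det) - Real.log ((V (t : ℕ)).det)) :=
      Finset.sum_congr rfl fun t _ => hlog t
    rw [h1, Fin.sum_univ_eq_sum_range (fun n => Real.log ((V (n + 1)).det)
      - Real.log ((V n).det)) T, Finset.sum_range_sub (fun n => Real.log ((V n).det))]
  -- value of V 0
  have hV0 : Real.log ((V 0).det) = d * Real.log lam := by
    have : V 0 = lam • (1 : Matrix (Fin d) (Fin d) ℝ) := by
      rw [hV]; simp
    rw [this, Matrix.det_smul, Matrix.det_one, mul_one, Real.log_pow]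
    simp
  -- trace bound
  have hxsq : ∀ t : Fin T, ∑ i, x t i ^ 2 ≤ L ^ 2 := by
    intro t
    have h := hx t
    rw [l2norm] at h
    have hnn : 0 ≤ ∑ i, x t i ^ 2 := Finset.sum_nonneg fun i _ => sq_nonneg _
    nlinarith [Real.sq_sqrt hnn, Real.sqrt_nonneg (∑ i, x t i ^ 2)]
  have htrace : (V T).trace ≤ d * lam + L ^ 2 * T := by
    rw [hV]
    simp only
    rw [Matrix.trace_add, Matrix.trace_smul, Matrix.trace_one, Matrix.trace_sum]
    have hfilter : Finset.univ.filter (fun s : Fin T => (s : ℕ) < T) = Finset.univ := by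
      ext s; simp [s.isLt]
    rw [hfilter]
    have htr_vmv : ∀ t : Fin T, (vecMulVec (x t) (x t)).trace = ∑ i, x t i ^ 2 := by
      intro t
      simp [Matrix.trace, Matrix.diag, vecMulVec, sq]
    have : ∑ t : Fin T, (vecMulVec (x t) (x t)).trace ≤ ∑ _t : Fin T, L ^ 2 :=
      Finset.sum_le_sum fun t _ => by rw [htr_vmv t]; exact hxsq t
    simp only [Finset.sum_const, Finset.card_univ, Fintype.card_fin, nsmul_eq_mul] at this
    have hcard : (Fintype.card (Fin d) : ℝ) = d := by simp
    simp only [smul_eq_mul]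
    calc lam * (Fintype.card (Fin d) : ℝ) + ∑ t : Fin T, (vecMulVec (x t) (x t)).trace
        ≤ lam * d + T * L ^ 2 := by rw [hcard]; linarith
      _ = d * lam + L ^ 2 * T := by ring
  have htrpos : 0 < (V T).trace := by
    have := epl_trace_eq_sum (hVpd T).isHermitian
    rw [this]
    exact Finset.sum_pos (fun i _ => (hVpd T).eigenvalues_pos i)
      (by simp [Finset.univ_nonempty_iff, Fin.pos_iff_nonempty.mp hd])
  have hdpos : (0:ℝ) < d := by exact_mod_cast hd
  have hfinal : Real.log ((V T).det) - Real.log ((V 0).det)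
      ≤ d * Real.log (1 + L ^ 2 * T / (d * lam)) := by
    have h1 : Real.log ((V T).det) ≤ d * Real.log ((V T).trace / d) :=
      epl_log_det_le hd (hVpd T)
    rw [hV0]
    have h2 : Real.log ((V T).trace / d) - Real.log lam
        = Real.log ((V T).trace / (d * lam)) := by
      rw [← Real.log_div (by positivity) hlam.ne']
      congr 1
      field_simp
    have h3 : Real.log ((V T).trace / (d * lam)) ≤ Real.log (1 + L ^ 2 * T / (d * lam)) := by
      apply Real.log_le_log (by positivity)
      rw [div_le_iff₀ (by positivity)]
      calc (V T).trace ≤ d * lam + L ^ 2 * T := htrace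
        _ = (1 + L ^ 2 * T / (d * lam)) * (d * lam) := by field_simp
    calc Real.log ((V T).det) - d * Real.log lam
        ≤ d * Real.log ((V T).trace / d) - d * Real.log lam := by linarith
      _ = d * (Real.log ((V T).trace / d) - Real.log lam) := by ring
      _ = d * Real.log ((V T).trace / (d * lam)) := by rw [h2]
      _ ≤ d * Real.log (1 + L ^ 2 * T / (d * lam)) := by
          exact mul_le_mul_of_nonneg_left h3 hdpos.le
  calc ∑ t : Fin T,
        min 1 (x t ⬝ᵥ
          ((lam • (1 : Matrix (Fin d) (Fin d) ℝ) +
              ∑ s ∈ Finset.univ.filter (fun s : Fin T => s < t),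
                vecMulVec (x s) (x s))⁻¹ *ᵥ x t))
      = ∑ t : Fin T, min 1 (q t) := hsum1
    _ ≤ 2 * ∑ t : Fin T, Real.log (1 + q t) := hsum2
    _ = 2 * (Real.log ((V T).det) - Real.log ((V 0).det)) := by rw [htel]
    _ ≤ 2 * (d * Real.log (1 + L ^ 2 * T / (d * lam))) :=
        mul_le_mul_of_nonneg_left hfinal (by norm_num)
    _ = 2 * d * Real.log (1 + L ^ 2 * T / (d * lam)) := by ring
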